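/- Let x, â ∈ ℝⁿ, B an n×n matrix, bounds L_j ≤ U_j (L_j = a̲_j(λ) - â_j ≤ 0 ≤ a̅_j(λ) - â_j = U_j), and radius r = δ̅(λ) ≥ 0. The optimal value of max { yᵀx + âᵀx : L_j ≤ y_j ≤ U_j ∀j, ‖By‖₂ ≤ r } equals the optimal value of min { γ·r + Σ_j α_j U_j - Σ_j β_j L_j + âᵀx : α_j - β_j + B_jᵀu = x_j ∀j, ‖u‖₂ ≤ γ, α, β ≥ 0, γ ≥ 0, u ∈ ℝⁿ }, where B_j is the j-th column of B. (Strong conic/Lagrangian duality for this bounded convex program with nonempty interior, assuming L_j < 0 < U_j and r > 0.) -/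

import Mathlib

open Set

noncomputable def myN {n : ℕ} (v : Fin n → ℝ) : ℝ := Real.sqrt (∑ i, v i ^ 2)

lemma myN_eq_norm {n : ℕ} (v : Fin n → ℝ) :
    myN v = ‖(WithLp.equiv 2 (Fin n → ℝ)).symm v‖ := by
  rw [EuclideanSpace.norm_eq]
  simp [myN, Real.norm_eq_abs, sq_abs]

lemma myN_nonneg {n : ℕ} (v : Fin n → ℝ) : 0 ≤ myN v := Real.sqrt_nonneg _

lemma myN_zero {n : ℕ} : myN (0 : Fin n → ℝ) = 0 := by simp [myN]

lemma myN_smul {n : ℕ} (s : ℝ) (a : Fin n → ℝ) : myN (s • a) = |s| * myN a := by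
  simp only [myN_eq_norm]
  rw [show (WithLp.equiv 2 (Fin n → ℝ)).symm (s • a)
      = s • (WithLp.equiv 2 (Fin n → ℝ)).symm a from rfl]
  simp [norm_smul]

lemma myN_inner_le {n : ℕ} (a b : Fin n → ℝ) : ∑ i, a i * b i ≤ myN a * myN b := by
  simp only [myN_eq_norm]
  have := real_inner_le_norm ((WithLp.equiv 2 (Fin n → ℝ)).symm a)
    ((WithLp.equiv 2 (Fin n → ℝ)).symm b)
  rw [PiLp.inner_apply] at this
  simpa [mul_comm] using this

lemma myN_sq {n : ℕ} (a : Fin n → ℝ) : myN a ^ 2 = ∑ i, a i ^ 2 := by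
  rw [myN]; exact Real.sq_sqrt (by positivity)

lemma myN_eq_zero {n : ℕ} {a : Fin n → ℝ} (h : myN a = 0) : a = 0 := by
  rw [myN_eq_norm] at h
  have := norm_eq_zero.mp h
  have : a = ((0 : EuclideanSpace ℝ (Fin n)) : Fin n → ℝ) := congrArg (WithLp.equiv 2 _) this
  simpa using this

lemma myN_continuous {n : ℕ} : Continuous (myN (n := n)) := by
  unfold myN
  exact Real.continuous_sqrt.comp
    (continuous_finset_sum _ fun i _ => (continuous_apply i).pow 2)

lemma myN_combo {n : ℕ} {v w : Fin n → ℝ} {a b r : ℝ}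
    (hv : myN v < r) (hw : myN w < r) (ha : 0 ≤ a) (hb : 0 ≤ b) (hab : a + b = 1) :
    myN (a • v + b • w) < r := by
  have h := convex_ball (0 : EuclideanSpace ℝ (Fin n)) r
    (mem_ball_zero_iff.2 (by rw [← myN_eq_norm]; exact hv))
    (mem_ball_zero_iff.2 (by rw [← myN_eq_norm]; exact hw)) ha hb hab
  rw [mem_ball_zero_iff] at h
  rw [myN_eq_norm]
  exact h

lemma mulVec_apply' {n : ℕ} (B : Matrix (Fin n) (Fin n) ℝ) (v : Fin n → ℝ) (i : Fin n) :
    B.mulVec v i = ∑ j, B i j * v j := by simp [Matrix.mulVec, dotProduct]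

/-- swap of sums: ⟨u, Bv⟩ = ∑_j v_j (Bᵀu)_j -/
lemma inner_mulVec_swap {n : ℕ} (B : Matrix (Fin n) (Fin n) ℝ) (v u : Fin n → ℝ) :
    ∑ i, B.mulVec v i * u i = ∑ j, v j * (∑ i, B i j * u i) := by
  simp only [mulVec_apply', Finset.sum_mul, Finset.mul_sum]
  rw [Finset.sum_comm]
  congr 1; ext j; congr 1; ext i; ring

set_option maxHeartbeats 2000000 in
theorem stmt_11 (n : ℕ)
    (x ahat L U : Fin n → ℝ) (B : Matrix (Fin n) (Fin n) ℝ) (r : ℝ)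
    (hL : ∀ j, L j < 0) (hU : ∀ j, 0 < U j) (hr : 0 < r) :
    sSup {t : ℝ | ∃ y : Fin n → ℝ,
        ((∀ j, L j ≤ y j ∧ y j ≤ U j) ∧
          Real.sqrt (∑ i, (B.mulVec y i) ^ 2) ≤ r) ∧
        t = (∑ j, y j * x j) + (∑ j, ahat j * x j)} =
      sInf {t : ℝ | ∃ (α β : Fin n → ℝ) (γ : ℝ) (u : Fin n → ℝ),
        ((∀ j, α j - β j + ∑ i, B i j * u i = x j) ∧
          Real.sqrt (∑ i, (u i) ^ 2) ≤ γ ∧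
          (∀ j, 0 ≤ α j) ∧ (∀ j, 0 ≤ β j) ∧ 0 ≤ γ) ∧
        t = γ * r + (∑ j, α j * U j) - (∑ j, β j * L j) +
              (∑ j, ahat j * x j)} := by
  set c : ℝ := ∑ j, ahat j * x j with hc
  set S₁ : Set ℝ := {t : ℝ | ∃ y : Fin n → ℝ,
        ((∀ j, L j ≤ y j ∧ y j ≤ U j) ∧
          Real.sqrt (∑ i, (B.mulVec y i) ^ 2) ≤ r) ∧
        t = (∑ j, y j * x j) + c} with hS₁
  set S₂ : Set ℝ := {t : ℝ | ∃ (α β : Fin n → ℝ) (γ : ℝ) (u : Fin n → ℝ),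
        ((∀ j, α j - β j + ∑ i, B i j * u i = x j) ∧
          Real.sqrt (∑ i, (u i) ^ 2) ≤ γ ∧
          (∀ j, 0 ≤ α j) ∧ (∀ j, 0 ≤ β j) ∧ 0 ≤ γ) ∧
        t = γ * r + (∑ j, α j * U j) - (∑ j, β j * L j) + c} with hS₂
  -- weak duality
  have weak : ∀ t₁ ∈ S₁, ∀ t₂ ∈ S₂, t₁ ≤ t₂ := by
    rintro t₁ ⟨y, ⟨hybox, hynorm⟩, rfl⟩ t₂ ⟨α, β, γ, u, ⟨heq, hua, hα, hβ, hγ⟩, rfl⟩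
    have hBy : myN (B.mulVec y) ≤ r := hynorm
    have hu : myN u ≤ γ := hua
    have key : ∑ j, y j * x j ≤ γ * r + (∑ j, α j * U j) - (∑ j, β j * L j) := by
      have h1 : ∑ j, y j * x j
          = (∑ j, y j * α j) - (∑ j, y j * β j) + ∑ i, B.mulVec y i * u i := by
        rw [inner_mulVec_swap]
        rw [← Finset.sum_sub_distrib, ← Finset.sum_add_distrib]
        congr 1; ext j
        rw [← heq j]; ring
      have h2 : ∑ j, y j * α j ≤ ∑ j, α j * U j := by
        apply Finset.sum_le_sum; intro j _
        have := (hybox j).2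
        nlinarith [hα j]
      have h3 : -(∑ j, y j * β j) ≤ -(∑ j, β j * L j) := by
        simp only [neg_le_neg_iff]
        apply Finset.sum_le_sum; intro j _
        have := (hybox j).1
        nlinarith [hβ j]
      have h4 : ∑ i, B.mulVec y i * u i ≤ γ * r := by
        calc ∑ i, B.mulVec y i * u i ≤ myN (B.mulVec y) * myN u := myN_inner_le _ _
          _ ≤ r * γ := by
              apply mul_le_mul hBy hu (myN_nonneg _) (le_trans (myN_nonneg _) hBy)
          _ = γ * r := mul_comm _ _
      linarith
    linarith
  -- the feasible set and attained maximum
  set K : Set (Fin n → ℝ) :=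
    {y | (∀ j, L j ≤ y j ∧ y j ≤ U j) ∧ myN (B.mulVec y) ≤ r} with hK
  have h0K : (0 : Fin n → ℝ) ∈ K := by
    refine ⟨fun j => ⟨(hL j).le, (hU j).le⟩, ?_⟩
    rw [Matrix.mulVec_zero, myN_zero]; exact hr.le
  have hKcomp : IsCompact K := by
    have hKeq : K = (Set.pi univ fun j => Icc (L j) (U j)) ∩
        ((fun y => myN (B.mulVec y)) ⁻¹' Iic r) := by
      ext y; simp only [hK, mem_setOf_eq, mem_inter_iff, Set.mem_pi, mem_univ, mem_Icc,
        forall_true_left, mem_preimage, mem_Iic]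
    rw [hKeq]
    have hBcont : Continuous (B.mulVec) := by
      have := LinearMap.continuous_of_finiteDimensional (Matrix.mulVecLin B)
      exact this
    exact (isCompact_univ_pi fun j => isCompact_Icc).inter_right
      (isClosed_Iic.preimage (myN_continuous.comp hBcont))
  have hobjcont : Continuous (fun y : Fin n → ℝ => ∑ j, y j * x j) :=
    continuous_finset_sum _ fun j _ => (continuous_apply j).mul continuous_const
  obtain ⟨ys, hysK, hysmax⟩ := hKcomp.exists_isMaxOn ⟨0, h0K⟩ hobjcont.continuousOn
  set v : ℝ := ∑ j, ys j * x j with hv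
  have hmax : ∀ y ∈ K, ∑ j, y j * x j ≤ v := fun y hy => hysmax hy
  have hv0 : 0 ≤ v := by simpa using hmax 0 h0K
  -- the open convex set for separation
  set O' : Set ((Fin n → ℝ) × ((Fin n → ℝ) × ℝ)) :=
    {q | (∀ j, q.1 j ∈ Set.Ioo (L j) (U j)) ∧
      myN (B.mulVec q.1 + q.2.1) < r ∧ q.2.2 < ∑ j, q.1 j * x j} with hO'
  set O : Set ((Fin n → ℝ) × ℝ) := Prod.snd '' O' with hO
  have hO'open : IsOpen O' := by
    rw [hO', setOf_and, setOf_and]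
    apply IsOpen.inter
    · have : {q : (Fin n → ℝ) × ((Fin n → ℝ) × ℝ) | ∀ j, q.1 j ∈ Set.Ioo (L j) (U j)}
          = ⋂ j, {q | q.1 j ∈ Set.Ioo (L j) (U j)} := by ext q; simp
      rw [this]
      exact isOpen_iInter_of_finite fun j =>
        (isOpen_Ioo).preimage ((continuous_apply j).comp continuous_fst)
    · apply IsOpen.inter
      · have hBcont : Continuous (B.mulVec) := by
          have := LinearMap.continuous_of_finiteDimensional (Matrix.mulVecLin B)
          exact this
        exact isOpen_Iio.preimage ((myN_continuous.comp
          ((hBcont.comp continuous_fst).add (continuous_fst.comp continuous_snd))))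
      · exact isOpen_lt (continuous_snd.comp continuous_snd)
          (continuous_finset_sum _ fun j _ =>
            ((continuous_apply j).comp continuous_fst).mul continuous_const)
  have hO'conv : Convex ℝ O' := by
    rintro q1 ⟨hb1, hn1, ht1⟩ q2 ⟨hb2, hn2, ht2⟩ a b ha hb hab
    refine ⟨?_, ?_, ?_⟩
    · intro j
      have := convex_Ioo (L j) (U j) (hb1 j) (hb2 j) ha hb hab
      simpa using this
    · have heq : B.mulVec (a • q1 + b • q2).1 + (a • q1 + b • q2).2.1
          = a • (B.mulVec q1.1 + q1.2.1) + b • (B.mulVec q2.1 + q2.2.1) := by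
        simp only [Prod.smul_fst, Prod.smul_snd, Prod.fst_add, Prod.snd_add,
          Matrix.mulVec_add, Matrix.mulVec_smul]
        funext i
        simp [Pi.add_apply, Pi.smul_apply, smul_eq_mul]
        ring
      rw [heq]
      exact myN_combo hn1 hn2 ha hb hab
    · have : (a • q1 + b • q2).2.2 = a * q1.2.2 + b * q2.2.2 := rfl
      rw [this]
      have hsum : ∑ j, (a • q1 + b • q2).1 j * x j
          = a * (∑ j, q1.1 j * x j) + b * (∑ j, q2.1 j * x j) := by
        simp only [Finset.mul_sum, ← Finset.sum_add_distrib]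
        congr 1; ext j
        simp [Pi.add_apply, Pi.smul_apply, smul_eq_mul]; ring
      rw [hsum]
      rcases eq_or_lt_of_le ha with ha0 | ha0
      · have hb1' : b = 1 := by linarith
        subst hb1'; rw [← ha0]; simpa using ht2
      · nlinarith
  have hOopen : IsOpen O := isOpenMap_snd O' hO'open
  have hOconv : Convex ℝ O := by
    have := hO'conv.linear_image (LinearMap.snd ℝ (Fin n → ℝ) ((Fin n → ℝ) × ℝ))
    exact this
  have hnotin : ((0 : Fin n → ℝ), v) ∉ O := by
    rintro ⟨⟨y, z, t⟩, ⟨hbox, hnorm, ht⟩, hpr⟩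
    have hz : z = 0 := (Prod.ext_iff.mp hpr).1
    have htv : t = v := (Prod.ext_iff.mp hpr).2
    subst hz htv
    have hyK : y ∈ K := by
      refine ⟨fun j => ⟨(hbox j).1.le, (hbox j).2.le⟩, ?_⟩
      have : B.mulVec y + 0 = B.mulVec y := by simp
      rw [this] at hnorm
      exact hnorm.le
    exact absurd (hmax y hyK) (not_le.mpr ht)
  obtain ⟨f, hsep⟩ := geometric_hahn_banach_open_point hOconv hOopen hnotin
  set μ : ℝ := f ((0 : Fin n → ℝ), (1 : ℝ)) with hμ
  set w : Fin n → ℝ := fun i => f (Pi.single i 1, (0 : ℝ)) with hw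
  have hf : ∀ (z : Fin n → ℝ) (t : ℝ), f (z, t) = (∑ i, z i * w i) + t * μ := by
    intro z t
    have h1 : ((z, t) : (Fin n → ℝ) × ℝ)
        = (∑ i, z i • ((Pi.single i (1 : ℝ) : Fin n → ℝ), (0 : ℝ)))
          + t • ((0 : Fin n → ℝ), (1 : ℝ)) := by
      refine Prod.ext ?_ ?_
      · rw [Prod.fst_add, Prod.fst_sum]
        funext j
        simp only [Prod.smul_fst, Pi.add_apply, Finset.sum_apply, Pi.smul_apply,
          Pi.single_apply, smul_eq_mul, mul_ite, mul_one, mul_zero, Pi.zero_apply,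
          smul_zero, add_zero]
        rw [Finset.sum_ite_eq]
        simp
      · rw [Prod.snd_add, Prod.snd_sum]
        simp
    rw [h1, map_add, map_sum, map_smul]
    simp only [map_smul, smul_eq_mul]
    rfl
  have hsep' : ∀ p ∈ O, (∑ i, p.1 i * w i) + p.2 * μ < v * μ := by
    intro p hp
    have := hsep p hp
    rwa [show p = (p.1, p.2) from rfl, hf p.1 p.2, hf 0 v,
      show ∑ i, (0 : Fin n → ℝ) i * w i = 0 by simp, zero_add] at this
  -- membership helper
  have hmemO : ∀ (y z : Fin n → ℝ) (t : ℝ), (∀ j, L j < y j ∧ y j < U j) →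
      myN (B.mulVec y + z) < r → t < ∑ j, y j * x j → ((z, t) : (Fin n → ℝ) × ℝ) ∈ O := by
    intro y z t hbox hnorm ht
    exact ⟨(y, z, t), ⟨fun j => ⟨(hbox j).1, (hbox j).2⟩, hnorm, ht⟩, rfl⟩
  -- μ ≥ 0
  have hμ0 : 0 ≤ μ := by
    by_contra h
    push_neg at h
    have hmem : ∀ t < (0:ℝ), ((0 : Fin n → ℝ), t) ∈ O := by
      intro t ht
      apply hmemO 0 0 t (fun j => ⟨hL j, hU j⟩)
      · simpa [myN_zero] using hr
      · simpa using ht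
    set t0 : ℝ := min v (-1) with ht0
    have h1 := hsep' _ (hmem t0 (lt_of_le_of_lt (min_le_right _ _) (by norm_num)))
    simp only [Pi.zero_apply, zero_mul, Finset.sum_const_zero, zero_add] at h1
    have : v * μ ≤ t0 * μ := mul_le_mul_of_nonpos_right (min_le_left _ _) h.le
    linarith
  -- μ ≠ 0
  have hμpos : 0 < μ := by
    rcases eq_or_lt_of_le hμ0 with h0 | h; swap
    · exact h
    exfalso
    have hmem : ∀ z : Fin n → ℝ, myN z < r → ((z, (-1 : ℝ)) : (Fin n → ℝ) × ℝ) ∈ O := by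
      intro z hz
      apply hmemO 0 z (-1) (fun j => ⟨hL j, hU j⟩)
      · simpa using hz
      · simpa using (by norm_num : (-1:ℝ) < 0)
    set s : ℝ := r / (2 * (myN w + 1)) with hs
    have hwpos : 0 < myN w + 1 := by have := myN_nonneg w; linarith
    have hspos : 0 < s := by positivity
    have hzsmall : myN (s • w) < r := by
      rw [myN_smul, abs_of_pos hspos, hs]
      rw [div_mul_eq_mul_div, div_lt_iff₀ (by positivity)]
      nlinarith [myN_nonneg w]
    have h1 := hsep' _ (hmem (s • w) hzsmall)
    rw [← h0] at h1
    simp only [mul_zero] at h1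
    have h2 : ∑ i, (s • w) i * w i = s * ∑ i, w i ^ 2 := by
      rw [Finset.mul_sum]; congr 1; ext i
      simp [smul_eq_mul]; ring
    rw [h2] at h1
    nlinarith [Finset.sum_nonneg (fun i (_ : i ∈ Finset.univ) => sq_nonneg (w i))]
  -- the dual vector
  set u : Fin n → ℝ := fun i => w i / μ with hu
  have hO2 : ∀ (z : Fin n → ℝ) (t : ℝ), ((z, t) : (Fin n → ℝ) × ℝ) ∈ O →
      t ≤ v - ∑ i, z i * u i := by
    intro z t hp
    have h1 := hsep' (z, t) hp
    simp only at h1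
    have h2 : ∑ i, z i * w i = μ * ∑ i, z i * u i := by
      rw [Finset.mul_sum]; congr 1; ext i
      rw [hu]; field_simp
    rw [h2] at h1
    nlinarith
  -- normalized dual vector
  set nu : ℝ := myN u with hnu
  have hnu0 : 0 ≤ nu := myN_nonneg u
  obtain ⟨uhat, huhat_norm, huhat_inner⟩ :
      ∃ uhat : Fin n → ℝ, myN uhat ≤ 1 ∧ ∑ i, uhat i * u i = nu := by
    by_cases hu0 : u = 0
    · refine ⟨0, by simp [myN_zero], ?_⟩
      simp [hu0, hnu, myN_zero]
    · have hnupos : 0 < nu := by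
        rcases eq_or_lt_of_le hnu0 with h | h
        · exact absurd (myN_eq_zero h.symm) hu0
        · exact h
      refine ⟨nu⁻¹ • u, ?_, ?_⟩
      · rw [myN_smul, abs_of_pos (by positivity), ← hnu, inv_mul_cancel₀ hnupos.ne']
      · have : ∑ i, (nu⁻¹ • u) i * u i = nu⁻¹ * ∑ i, u i ^ 2 := by
          rw [Finset.mul_sum]; congr 1; ext i
          simp [smul_eq_mul]; ring
        rw [this, ← myN_sq, ← hnu]
        field_simp
  -- the key inequality for all box points
  have key : ∀ y : Fin n → ℝ, (∀ j, L j ≤ y j ∧ y j ≤ U j) →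
      (∑ j, y j * x j) - (∑ i, B.mulVec y i * u i) + r * nu ≤ v := by
    intro y hy
    set A : ℝ := ∑ j, y j * x j with hA
    set C : ℝ := ∑ i, B.mulVec y i * u i with hC
    have hstep : ∀ s : ℝ, 0 < s → s < 1 → s * (A - C + r * nu) ≤ v + (1 - s) := by
      intro s hs0 hs1
      set z : Fin n → ℝ := (s * r) • uhat - B.mulVec (s • y) with hz
      have hmem : ((z, s * A - (1 - s)) : (Fin n → ℝ) × ℝ) ∈ O := by
        apply hmemO (s • y) z (s * A - (1 - s))
        · intro j
          have h1 := (hy j).1; have h2 := (hy j).2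
          have hLj := hL j; have hUj := hU j
          constructor
          · show L j < s * y j
            rcases le_or_gt 0 (y j) with h | h
            · nlinarith
            · nlinarith
          · show s * y j < U j
            rcases le_or_gt (y j) 0 with h | h
            · nlinarith
            · nlinarith
        · have heq : B.mulVec (s • y) + z = (s * r) • uhat := by
            rw [hz]; abel
          rw [heq, myN_smul, abs_of_pos (by positivity : (0:ℝ) < s * r)]
          have hsr : 0 < s * r := mul_pos hs0 hr
          nlinarith [mul_le_mul_of_nonneg_left huhat_norm hsr.le,
            mul_pos (sub_pos.mpr hs1) hr]
        · have heq : ∑ j, (s • y) j * x j = s * A := by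
            rw [hA, Finset.mul_sum]; congr 1; ext j
            simp [smul_eq_mul]; ring
          rw [heq]; linarith
      have h2 : s * A - (1 - s) ≤ v - ∑ i, z i * u i := hO2 z (s * A - (1 - s)) hmem
      have h3 : ∑ i, z i * u i = s * r * nu - s * C := by
        rw [hz]
        have : ∀ i, ((s * r) • uhat - B.mulVec (s • y)) i * u i
            = (s * r) * (uhat i * u i) - s * (B.mulVec y i * u i) := by
          intro i
          rw [Matrix.mulVec_smul]
          simp [smul_eq_mul]; ring
        rw [Finset.sum_congr rfl fun i _ => this i, Finset.sum_sub_distrib,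
          ← Finset.mul_sum, ← Finset.mul_sum, huhat_inner, ← hC]
      rw [h3] at h2
      linarith
    by_contra hcon
    push_neg at hcon
    obtain ⟨T, hTdef⟩ : ∃ T : ℝ, T = A - C + r * nu := ⟨_, rfl⟩
    have hvT : v < T := by rw [hTdef]; exact hcon
    have hstep' : ∀ s : ℝ, 0 < s → s < 1 → s * T ≤ v + (1 - s) := by
      intro s h1 h2; rw [hTdef]; exact hstep s h1 h2
    have hT1 : 0 < T + 1 := by linarith
    have hv1 : 0 < v + 1 := by linarith
    obtain ⟨s0, hs0def⟩ : ∃ s0 : ℝ, s0 = (v + 1) / (T + 1) := ⟨_, rfl⟩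
    have hs00 : 0 < s0 := by rw [hs0def]; exact div_pos hv1 hT1
    have hs01 : s0 < 1 := by rw [hs0def, div_lt_one hT1]; linarith
    have hprod : s0 * (T + 1) = v + 1 := by
      rw [hs0def]; exact div_mul_cancel₀ _ hT1.ne'
    have h5 := hstep' ((s0 + 1) / 2) (by linarith) (by linarith)
    nlinarith [mul_pos (by linarith : (0:ℝ) < (s0 + 1) / 2 - s0) hT1]
  -- dual candidate
  set av : Fin n → ℝ := fun j => x j - ∑ i, B i j * u i with hav
  set α : Fin n → ℝ := fun j => max (av j) 0 with hα
  set β : Fin n → ℝ := fun j => max (-(av j)) 0 with hβ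
  set d : ℝ := nu * r + (∑ j, α j * U j) - (∑ j, β j * L j) + c with hd
  have hdS₂ : d ∈ S₂ := by
    refine ⟨α, β, nu, u, ⟨?_, ?_, ?_, ?_, ?_⟩, rfl⟩
    · intro j
      have : α j - β j = av j := max_zero_sub_max_neg_zero_eq_self (av j)
      rw [this, hav]; ring
    · show Real.sqrt (∑ i, u i ^ 2) ≤ nu
      rw [hnu]; exact le_of_eq rfl
    · intro j; exact le_max_right _ _
    · intro j; exact le_max_right _ _
    · exact hnu0
  set yhat : Fin n → ℝ := fun j => if 0 ≤ av j then U j else L j with hyhat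
  have hyhat_box : ∀ j, L j ≤ yhat j ∧ yhat j ≤ U j := by
    intro j
    rw [hyhat]
    dsimp only
    split <;> constructor <;> linarith [hL j, hU j]
  have hsum1 : (∑ j, α j * U j) - ∑ j, β j * L j = ∑ j, yhat j * av j := by
    rw [← Finset.sum_sub_distrib]
    congr 1; ext j
    rw [hα, hβ, hyhat]
    dsimp only
    rcases le_or_gt 0 (av j) with h | h
    · rw [max_eq_left h, max_eq_right (by linarith), if_pos h]; ring
    · rw [max_eq_right h.le, max_eq_left (by linarith), if_neg (not_le.mpr h)]; ring
  have hAC : (∑ j, yhat j * x j) - (∑ i, B.mulVec yhat i * u i) = ∑ j, yhat j * av j := by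
    rw [inner_mulVec_swap, ← Finset.sum_sub_distrib]
    congr 1; ext j
    rw [hav]; ring
  have hkey := key yhat hyhat_box
  have hdle : d ≤ v + c := by
    rw [hd]
    have h3 : (∑ j, yhat j * av j) + r * nu ≤ v := by rw [← hAC]; linarith [hkey]
    linarith [hsum1]
  -- S₁ membership of the optimal value
  have hvc : v + c ∈ S₁ := by
    refine ⟨ys, ⟨hysK.1, ?_⟩, rfl⟩
    exact hysK.2
  -- assembly
  apply le_antisymm
  · apply csSup_le ⟨v + c, hvc⟩
    intro t₁ ht₁
    apply le_csInf ⟨d, hdS₂⟩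
    intro t₂ ht₂
    exact weak t₁ ht₁ t₂ ht₂
  · have h1 : sInf S₂ ≤ d := csInf_le ⟨v + c, fun t₂ ht₂ => weak _ hvc _ ht₂⟩ hdS₂
    have h2 : v + c ≤ sSup S₁ := le_csSup ⟨d, fun t₁ ht₁ => weak _ ht₁ _ hdS₂⟩ hvc
    linarith
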